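/- Let A be a good-monomial algebra for Γ over F, graded as an F-algebra so that each good monomial e(x₁,k₁)⋯e(x_r,k_r) is homogeneous of degree k₁+⋯+k_r, and let A₁ = span_F{e(x,1) : x ∈ Γ₊} be its degree-1 component. Then the canonical F-algebra homomorphism from the tensor algebra T(A₁) to A is surjective, and its kernel is generated as a two-sided ideal by its homogeneous component of degree 2 (i.e., A is a quadratic algebra) if and only if Γ is uniform. -/

import Mathlib

/-- A finite ranked poset: a partial order with a unique minimal element `star`
and a rank function `rk` such that `rk star = 0`, covering relations increase the
rank by exactly one, and `rk` is strictly monotone (for a finite poset this is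
equivalent to: all maximal chains in `[star, x]` have the same length `rk x`). -/
structure RankedPoset (Γ : Type) [PartialOrder Γ] where
  star : Γ
  rk : Γ → ℕ
  bot_le : ∀ x, star ≤ x
  rk_star : rk star = 0
  rk_covBy : ∀ ⦃x y : Γ⦄, x ⋖ y → rk y = rk x + 1
  rk_strictMono : StrictMono rk


/-- `a ∈ S_x(1)`: `a < x` and `d(x,a) = 1`. -/
def memS1 {Γ : Type} [PartialOrder Γ] (R : RankedPoset Γ) (x a : Γ) : Prop :=
  a < x ∧ R.rk x - R.rk a = 1

/-- `Γ` is uniform if for every `x ∈ Γ₊` the equivalence relation on `S_x(1)` generated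
by `a ∼_x b ↔ ∃ c ∈ S_a(1) ∩ S_b(1)` has exactly one equivalence class. -/
def RankedPoset.Uniform {Γ : Type} [PartialOrder Γ] (R : RankedPoset Γ) : Prop :=
  ∀ x : Γ, x ≠ R.star →
    (∃ a, memS1 R x a) ∧
      ∀ a b : Γ, memS1 R x a → memS1 R x b →
        Relation.EqvGen
          (fun u v => memS1 R x u ∧ memS1 R x v ∧ ∃ c, memS1 R u c ∧ memS1 R v c) a b

section GoodMonomial

variable {Γ : Type} [PartialOrder Γ] (R : RankedPoset Γ)

/-- A list `[(x₁,k₁),…,(x_r,k_r)]` indexes a good monomial `e(x₁,k₁)⋯e(x_r,k_r)` if each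
`xᵢ ∈ Γ₊`, `1 ≤ kᵢ ≤ rk xᵢ`, and no `(xᵢ,kᵢ) ⊵ (xᵢ₊₁,kᵢ₊₁)`, i.e. it never happens that
`xᵢ > xᵢ₊₁` with `kᵢ = rk xᵢ - rk xᵢ₊₁`. -/
def IsGoodList (l : List (Γ × ℕ)) : Prop :=
  (∀ p ∈ l, p.1 ≠ R.star ∧ 1 ≤ p.2 ∧ p.2 ≤ R.rk p.1) ∧
    List.Chain' (fun p q => ¬(q.1 < p.1 ∧ p.2 = R.rk p.1 - R.rk q.1)) l

variable (A : Type) [Ring A] (e : Γ → ℕ → A)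

/-- The good monomial `e(x₁,k₁)⋯e(x_r,k_r)` indexed by a good list. -/
def goodMonomial (l : {l : List (Γ × ℕ) // IsGoodList R l}) : A :=
  (l.1.map fun p => e p.1 p.2).prod

variable (F : Type) [Field F] [Algebra F A]

/-- The degree-one component `A₁ = span_F {e(x,1) : x ∈ Γ₊}`. -/
noncomputable def genOne : Submodule F A :=
  Submodule.span F {a | ∃ x : Γ, x ≠ R.star ∧ a = e x 1}

/-- The canonical `F`-algebra homomorphism `T(A₁) → A` from the tensor algebra on `A₁`. -/
noncomputable def canMap : TensorAlgebra F ↥(genOne R A e F) →ₐ[F] A :=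
  TensorAlgebra.lift F (genOne R A e F).subtype

/-- The homogeneous component of degree 2 of the tensor algebra `T(A₁)`:
the span of the products `ι(u)·ι(v)`. -/
noncomputable def degTwo : Submodule F (TensorAlgebra F ↥(genOne R A e F)) :=
  Submodule.span F {w | ∃ u v : ↥(genOne R A e F),
    w = TensorAlgebra.ι F u * TensorAlgebra.ι F v}

end GoodMonomial


set_option linter.unusedSectionVars false
section PosetAux
variable {Γ : Type} [PartialOrder Γ] (R : RankedPoset Γ)

lemma star_lt {x : Γ} (h : x ≠ R.star) : R.star < x :=
  lt_of_le_of_ne (R.bot_le x) (Ne.symm h)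

lemma one_le_rk {x : Γ} (h : x ≠ R.star) : 1 ≤ R.rk x := by
  have := R.rk_strictMono (star_lt R h)
  omega

lemma ne_star_of_rk {x : Γ} (h : 1 ≤ R.rk x) : x ≠ R.star := by
  intro hx; rw [hx, R.rk_star] at h; omega

lemma covBy_of_lt_rk {a x : Γ} (h : a < x) (hr : R.rk x = R.rk a + 1) : a ⋖ x := by
  refine ⟨h, fun w hw1 hw2 => ?_⟩
  have h1 := R.rk_strictMono hw1
  have h2 := R.rk_strictMono hw2
  omega

lemma memS1_covBy {x a : Γ} (h : memS1 R x a) : a ⋖ x := by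
  refine covBy_of_lt_rk R h.1 ?_
  have := R.rk_strictMono h.1
  have := h.2
  omega

lemma covBy_memS1 {x a : Γ} (h : a ⋖ x) : memS1 R x a :=
  ⟨h.1, by have := R.rk_covBy h; omega⟩

lemma exists_covBy_between [Fintype Γ] {y x : Γ} (h : y < x) : ∃ b, y ≤ b ∧ b ⋖ x := by
  have hfin : ({b | y ≤ b ∧ b < x} : Set Γ).Finite := Set.toFinite _
  obtain ⟨b, hb, hmax⟩ := Set.Finite.exists_maximalFor id _ hfin ⟨y, le_refl y, h⟩
  refine ⟨b, hb.1, hb.2, fun w hw1 hw2 => ?_⟩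
  have : w ∈ {b | y ≤ b ∧ b < x} := ⟨le_trans hb.1 hw1.le, hw2⟩
  have := hmax this hw1.le
  simp only [id] at this
  exact absurd this (not_le_of_gt hw1)

lemma exists_covBy [Fintype Γ] {x : Γ} (h : x ≠ R.star) : ∃ b, b ⋖ x := by
  obtain ⟨b, _, hb⟩ := exists_covBy_between (star_lt R h)
  exact ⟨b, hb⟩

variable [Fintype Γ]

/-- Letters: elements of `Γ₊`. -/
abbrev Lp (R : RankedPoset Γ) := {x : Γ // x ≠ R.star}

/-- Covering chains starting at `x`, of a given positive length. -/
inductive Chn : Lp R → ℕ → List (Lp R) → Prop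
  | single (x) : Chn x 1 [x]
  | cons {a : Lp R} {n l} (x : Lp R) (h : (a : Γ) ⋖ (x : Γ)) (hc : Chn a n l) :
      Chn x (n + 1) (x :: l)

lemma Chn.le_rk {x : Lp R} {n l} (h : Chn R x n l) : n ≤ R.rk x := by
  induction h with
  | single x => exact one_le_rk R x.2
  | cons x hcov hc ih => have := R.rk_covBy hcov; omega

lemma Chn.one_le {x : Lp R} {n l} (h : Chn R x n l) : 1 ≤ n := by
  cases h <;> omega

noncomputable def chooseCov (x : Lp R) : Lp R := open Classical in
  if h : ∃ a : Lp R, (a : Γ) ⋖ (x : Γ) then h.choose else x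

lemma chooseCov_spec {x : Lp R} (h2 : 2 ≤ R.rk x) : ((chooseCov R x : Γ)) ⋖ (x : Γ) := by
  have hne : ∃ a : Lp R, (a : Γ) ⋖ (x : Γ) := by
    obtain ⟨b, hb⟩ := exists_covBy R x.2
    have hrb : R.rk b + 1 = R.rk x := (R.rk_covBy hb).symm
    exact ⟨⟨b, ne_star_of_rk R (by omega)⟩, hb⟩
  classical rw [chooseCov, dif_pos hne]
  exact hne.choose_spec

noncomputable def stdChain : Lp R → ℕ → List (Lp R)
  | _, 0 => []
  | x, n + 1 => x :: stdChain (chooseCov R x) n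

lemma stdChain_chn : ∀ n, ∀ x : Lp R, 1 ≤ n → n ≤ R.rk x → Chn R x n (stdChain R x n) := by
  intro n
  induction n with
  | zero => omega
  | succ n ih =>
    intro x _ hle
    cases Nat.eq_or_lt_of_le (show 1 ≤ n + 1 from by omega) with
    | inl h =>
      have : n = 0 := by omega
      subst this
      exact Chn.single x
    | inr h =>
      have hn : 1 ≤ n := by omega
      have h2 : 2 ≤ R.rk x := by omega
      have hcov := chooseCov_spec R (x := x) h2
      have hrk : R.rk (chooseCov R x) + 1 = R.rk x := (R.rk_covBy hcov).symm
      exact Chn.cons x hcov (ih (chooseCov R x) hn (by omega))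

end PosetAux


section AlgAux
variable {Γ : Type} [PartialOrder Γ] [Fintype Γ] (R : RankedPoset Γ)
  (F : Type) [Field F] (A : Type) [Ring A] [Algebra F A] (e : Γ → ℕ → A)

/-- The basis vectors of `A₁`. -/
noncomputable def vG (x : Lp R) : ↥(genOne R A e F) :=
  ⟨e ↑x 1, Submodule.subset_span ⟨x, x.2, rfl⟩⟩

/-- The word `ι(e x₁ 1)⋯ι(e xᵣ 1)` in the tensor algebra. -/
noncomputable def ω (l : List (Lp R)) : TensorAlgebra F ↥(genOne R A e F) :=
  (l.map fun x => TensorAlgebra.ι F (vG R F A e x)).prod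

lemma ω_nil : ω R F A e [] = 1 := rfl

lemma ω_cons (x : Lp R) (l : List (Lp R)) :
    ω R F A e (x :: l) = TensorAlgebra.ι F (vG R F A e x) * ω R F A e l := by
  simp [ω]

lemma ω_append (l m : List (Lp R)) :
    ω R F A e (l ++ m) = ω R F A e l * ω R F A e m := by
  simp [ω]

/-- The product `e x₁ 1 ⋯ e xᵣ 1` in `A`. -/
def eW (l : List (Lp R)) : A := (l.map fun x => e ↑x 1).prod

lemma canMap_ω (l : List (Lp R)) : canMap R A e F (ω R F A e l) = eW R A e l := by
  induction l with
  | nil => simp [ω_nil, eW]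
  | cons x t ih =>
    rw [ω_cons, map_mul, ih]
    have : canMap R A e F (TensorAlgebra.ι F (vG R F A e x)) = e ↑x 1 := by
      simp [canMap, vG, TensorAlgebra.lift_ι_apply]
    rw [this]
    simp [eW]

lemma gmL_goodMonomial (l : List (Γ × ℕ)) (h : IsGoodList R l) :
    goodMonomial R A e ⟨l, h⟩ = (l.map fun p => e p.1 p.2).prod := rfl

variable (hmul : ∀ x y : Γ, ∀ j k : ℕ, y ≠ R.star → y < x → j = R.rk x - R.rk y →
      1 ≤ k → k ≤ R.rk y → e x j * e y k = e x (j + k))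

include hmul in
lemma Chn.eW_eq {x : Lp R} {n l} (h : Chn R x n l) : eW R A e l = e ↑x n := by
  induction h with
  | single x => simp [eW]
  | @cons a n l x hcov hc ih =>
    have hrk := R.rk_covBy hcov
    have h1 : eW R A e (x :: l) = e ↑x 1 * eW R A e l := by simp [eW]
    rw [h1, ih, hmul ↑x ↑a 1 n a.2 hcov.1 (by omega) hc.one_le (hc.le_rk R)]
    rw [Nat.add_comm]

/-- The span of the two-sided ideal generated by the degree-two part of the kernel,
as a submodule. -/
noncomputable def SJ : Submodule F (TensorAlgebra F ↥(genOne R A e F)) where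
  carrier := {t | t ∈ TwoSidedIdeal.span
      {y | canMap R A e F y = 0 ∧ y ∈ degTwo R A e F}}
  add_mem' := fun h1 h2 => by
    show _ ∈ TwoSidedIdeal.span _
    exact TwoSidedIdeal.add_mem _ h1 h2
  zero_mem' := by
    show (0 : TensorAlgebra F ↥(genOne R A e F)) ∈ TwoSidedIdeal.span
      {y | canMap R A e F y = 0 ∧ y ∈ degTwo R A e F}
    exact TwoSidedIdeal.zero_mem _
  smul_mem' := fun c t ht => by
    show _ ∈ TwoSidedIdeal.span _
    rw [Algebra.smul_def]
    exact TwoSidedIdeal.mul_mem_left _ _ _ ht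

lemma mem_SJ_iff {t} : t ∈ SJ R F A e ↔ t ∈ TwoSidedIdeal.span
    {y | canMap R A e F y = 0 ∧ y ∈ degTwo R A e F} := Iff.rfl

lemma SJ_mul_left {t} (r) (ht : t ∈ SJ R F A e) : r * t ∈ SJ R F A e := by
  rw [mem_SJ_iff] at ht ⊢
  exact TwoSidedIdeal.mul_mem_left _ _ _ ht

lemma SJ_mul_right {t} (r) (ht : t ∈ SJ R F A e) : t * r ∈ SJ R F A e := by
  rw [mem_SJ_iff] at ht ⊢
  exact TwoSidedIdeal.mul_mem_right _ _ _ ht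

lemma canMap_eq_zero_of_mem_SJ {t} (ht : t ∈ SJ R F A e) : canMap R A e F t = 0 := by
  rw [mem_SJ_iff] at ht
  have : t ∈ TwoSidedIdeal.ker (canMap R A e F).toRingHom :=
    TwoSidedIdeal.mem_span_iff.mp ht _
      (fun g (hg : canMap R A e F g = 0 ∧ g ∈ degTwo R A e F) =>
        (TwoSidedIdeal.mem_ker _).mpr hg.1)
  exact (TwoSidedIdeal.mem_ker _).mp this

include hmul in
lemma gen_mem_SJ {x a b : Lp R} (ha : (a:Γ) ⋖ (x:Γ)) (hb : (b:Γ) ⋖ (x:Γ)) :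
    ω R F A e [x, a] - ω R F A e [x, b] ∈ SJ R F A e := by
  have key : ∀ c : Lp R, (c:Γ) ⋖ (x:Γ) →
      canMap R A e F (ω R F A e [x, c]) = e ↑x 2 ∧
      ω R F A e [x, c] = TensorAlgebra.ι F (vG R F A e x) * TensorAlgebra.ι F (vG R F A e c) := by
    intro c hc
    have hrk := R.rk_covBy hc
    constructor
    · rw [canMap_ω]
      have : eW R A e [x, c] = e ↑x 1 * e ↑c 1 := by simp [eW]
      rw [this, hmul ↑x ↑c 1 1 c.2 hc.1 (by omega) le_rfl (one_le_rk R c.2)]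
    · simp [ω]
  obtain ⟨ha1, ha2⟩ := key a ha
  obtain ⟨hb1, hb2⟩ := key b hb
  rw [mem_SJ_iff]
  refine TwoSidedIdeal.subset_span (show _ ∈ {y | canMap R A e F y = 0 ∧ y ∈ degTwo R A e F} from ⟨?_, ?_⟩)
  · rw [map_sub, ha1, hb1, sub_self]
  · exact Submodule.sub_mem _
      (Submodule.subset_span ⟨_, _, ha2⟩) (Submodule.subset_span ⟨_, _, hb2⟩)

end AlgAux

section ChainCong
variable {Γ : Type} [PartialOrder Γ] [Fintype Γ] (R : RankedPoset Γ)
  (F : Type) [Field F] (A : Type) [Ring A] [Algebra F A] (e : Γ → ℕ → A)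
  (hmul : ∀ x y : Γ, ∀ j k : ℕ, y ≠ R.star → y < x → j = R.rk x - R.rk y →
      1 ≤ k → k ≤ R.rk y → e x j * e y k = e x (j + k))

lemma Chn.eq_single {x : Lp R} {l} (h : Chn R x 1 l) : l = [x] := by
  cases h with
  | single => rfl
  | cons _ hcov hc => have := hc.one_le R; omega

include hmul in
lemma chains_congruent (huni : R.Uniform) :
    ∀ n : ℕ, ∀ x : Lp R, ∀ l₁ l₂ : List (Lp R), Chn R x n l₁ → Chn R x n l₂ →
      ω R F A e l₁ - ω R F A e l₂ ∈ SJ R F A e := by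
  intro n
  induction n using Nat.strong_induction_on with
  | _ n ih =>
    intro x l₁ l₂ h₁ h₂
    cases h₁ with
    | single =>
      have := h₂.eq_single R
      subst this
      simpa using (SJ R F A e).zero_mem
    | @cons a n₀ l₁' _ hcov₁ hc₁ =>
      cases h₂ with
      | single => have := hc₁.one_le R; omega
      | @cons b _ l₂' _ hcov₂ hc₂ =>
        rcases Nat.lt_or_ge n₀ 2 with hn2 | hn2
        · -- n₀ = 1
          have hn1 : n₀ = 1 := by have := hc₁.one_le R; omega
          subst hn1
          rw [hc₁.eq_single R, hc₂.eq_single R]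
          exact gen_mem_SJ R F A e hmul hcov₁ hcov₂
        · -- n₀ ≥ 2
          have aux : ∀ u v : Γ, Relation.EqvGen
              (fun u v => memS1 R ↑x u ∧ memS1 R ↑x v ∧
                ∃ c, memS1 R u c ∧ memS1 R v c) u v →
              u = v ∨ (memS1 R ↑x u ∧ memS1 R ↑x v ∧
                ∀ (hu : u ≠ R.star) (hv : v ≠ R.star) (lu lv : List (Lp R)),
                  Chn R ⟨u, hu⟩ n₀ lu → Chn R ⟨v, hv⟩ n₀ lv →
                  ω R F A e (x :: lu) - ω R F A e (x :: lv) ∈ SJ R F A e) := by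
            intro u v huv
            induction huv with
            | rel u v h =>
              right
              obtain ⟨hxu, hxv, c, hcu, hcv⟩ := h
              refine ⟨hxu, hxv, ?_⟩
              intro hu hv lu lv hlu hlv
              have hru : n₀ ≤ R.rk u := hlu.le_rk R
              have hcovcu := memS1_covBy R hcu
              have hcovcv := memS1_covBy R hcv
              have hrc : R.rk u = R.rk c + 1 := R.rk_covBy hcovcu
              have hcst : c ≠ R.star := ne_star_of_rk R (by omega)
              obtain ⟨m, rfl⟩ : ∃ m, n₀ = m + 1 := ⟨n₀ - 1, by omega⟩
              have hlc : Chn R ⟨c, hcst⟩ m (stdChain R ⟨c, hcst⟩ m) :=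
                stdChain_chn R m ⟨c, hcst⟩ (by omega) (show m ≤ R.rk c by omega)
              have chU : Chn R ⟨u, hu⟩ (m+1) (⟨u,hu⟩ :: stdChain R ⟨c, hcst⟩ m) :=
                Chn.cons _ hcovcu hlc
              have chV : Chn R ⟨v, hv⟩ (m+1) (⟨v,hv⟩ :: stdChain R ⟨c, hcst⟩ m) :=
                Chn.cons _ hcovcv hlc
              have T1 : ω R F A e (x :: lu) -
                  ω R F A e (x :: ⟨u,hu⟩ :: stdChain R ⟨c, hcst⟩ m) ∈ SJ R F A e := by
                rw [ω_cons, ω_cons, ← mul_sub]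
                exact SJ_mul_left R F A e _ (ih (m+1) (by omega) ⟨u,hu⟩ _ _ hlu chU)
              have T3 : ω R F A e (x :: ⟨v,hv⟩ :: stdChain R ⟨c, hcst⟩ m) -
                  ω R F A e (x :: lv) ∈ SJ R F A e := by
                have T3' : ω R F A e (x :: lv) -
                    ω R F A e (x :: ⟨v,hv⟩ :: stdChain R ⟨c, hcst⟩ m) ∈ SJ R F A e := by
                  rw [ω_cons, ω_cons, ← mul_sub]
                  exact SJ_mul_left R F A e _ (ih (m+1) (by omega) ⟨v,hv⟩ _ _ hlv chV)
                have := Submodule.neg_mem _ T3'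
                rwa [neg_sub] at this
              have T2 : ω R F A e (x :: ⟨u,hu⟩ :: stdChain R ⟨c, hcst⟩ m) -
                  ω R F A e (x :: ⟨v,hv⟩ :: stdChain R ⟨c, hcst⟩ m) ∈ SJ R F A e := by
                have e1 : (x :: ⟨u,hu⟩ :: stdChain R ⟨c, hcst⟩ m)
                    = [x, ⟨u,hu⟩] ++ stdChain R ⟨c, hcst⟩ m := rfl
                have e2 : (x :: ⟨v,hv⟩ :: stdChain R ⟨c, hcst⟩ m)
                    = [x, ⟨v,hv⟩] ++ stdChain R ⟨c, hcst⟩ m := rfl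
                rw [e1, e2, ω_append, ω_append, ← sub_mul]
                exact SJ_mul_right R F A e _
                  (gen_mem_SJ R F A e hmul (memS1_covBy R hxu) (memS1_covBy R hxv))
              have hsum := Submodule.add_mem _ (Submodule.add_mem _ T1 T2) T3
              rw [sub_add_sub_cancel, sub_add_sub_cancel] at hsum
              exact hsum
            | refl u => exact Or.inl rfl
            | symm u v _ ihs =>
              rcases ihs with heq | ⟨h1, h2, h3⟩
              · exact Or.inl heq.symm
              · refine Or.inr ⟨h2, h1, ?_⟩
                intro hv hu lv lu hlv hlu
                have := Submodule.neg_mem _ (h3 hu hv lu lv hlu hlv)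
                rwa [neg_sub] at this
            | trans u v w _ _ ih1 ih2 =>
              rcases ih1 with heq1 | ⟨h1u, h1v, h13⟩
              · subst heq1; exact ih2
              · rcases ih2 with heq2 | ⟨h2v, h2w, h23⟩
                · subst heq2; exact Or.inr ⟨h1u, h1v, h13⟩
                · refine Or.inr ⟨h1u, h2w, ?_⟩
                  intro hu hw lu lw hlu hlw
                  have hru : n₀ ≤ R.rk u := hlu.le_rk R
                  have hxu := h1u
                  have hrxu : R.rk ↑x = R.rk u + 1 := R.rk_covBy (memS1_covBy R hxu)
                  have hrv : R.rk ↑x = R.rk v + 1 := R.rk_covBy (memS1_covBy R h1v)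
                  have hvst : v ≠ R.star := ne_star_of_rk R (by omega)
                  have hlv : Chn R ⟨v, hvst⟩ n₀ (stdChain R ⟨v, hvst⟩ n₀) :=
                    stdChain_chn R n₀ ⟨v, hvst⟩ (by omega) (show n₀ ≤ R.rk v by omega)
                  have m1 := h13 hu hvst lu _ hlu hlv
                  have m2 := h23 hvst hw _ lw hlv hlw
                  have hsum := Submodule.add_mem _ m1 m2
                  rwa [sub_add_sub_cancel] at hsum
          have hrel := (huni ↑x x.2).2 ↑a ↑b (covBy_memS1 R hcov₁) (covBy_memS1 R hcov₂)
          rcases aux ↑a ↑b hrel with heq | ⟨_, _, h3⟩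
          · have hab : a = b := Subtype.ext heq
            subst hab
            rw [ω_cons, ω_cons, ← mul_sub]
            exact SJ_mul_left R F A e _ (ih n₀ (by omega) a l₁' l₂' hc₁ hc₂)
          · exact h3 a.2 b.2 l₁' l₂' hc₁ hc₂

end ChainCong

section MergeIns
variable {Γ : Type} [PartialOrder Γ] [Fintype Γ] (R : RankedPoset Γ)
  (F : Type) [Field F] (A : Type) [Ring A] [Algebra F A] (e : Γ → ℕ → A)
  (hmul : ∀ x y : Γ, ∀ j k : ℕ, y ≠ R.star → y < x → j = R.rk x - R.rk y →
      1 ≤ k → k ≤ R.rk y → e x j * e y k = e x (j + k))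

include hmul in
lemma merge_congruent (huni : R.Uniform) :
    ∀ j : ℕ, 1 ≤ j → ∀ (x y : Lp R), (x:Γ) < (y:Γ) → j = R.rk ↑y - R.rk ↑x →
    ∀ k lx, Chn R x k lx →
      ω R F A e (stdChain R y j ++ lx) - ω R F A e (stdChain R y (j+k)) ∈ SJ R F A e := by
  intro j
  induction j with
  | zero => omega
  | succ j ihj =>
    intro _ x y hxy hd k lx hlx
    have hrxy : R.rk ↑x < R.rk ↑y := R.rk_strictMono hxy
    have hk1 : 1 ≤ k := hlx.one_le R
    have hkx : k ≤ R.rk ↑x := hlx.le_rk R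
    rcases Nat.eq_zero_or_pos j with hj0 | hj1
    · -- base case j + 1 = 1
      subst hj0
      have hcov : (x:Γ) ⋖ (y:Γ) := covBy_of_lt_rk R hxy (by omega)
      have h1 : stdChain R y 1 = [y] := by simp [stdChain]
      rw [h1]
      have hch1 : Chn R y (k+1) (y :: lx) := Chn.cons y hcov hlx
      have hch2 : Chn R y (k+1) (stdChain R y (k+1)) :=
        stdChain_chn R (k+1) y (by omega) (by omega)
      have : (1 + k) = k + 1 := by omega
      rw [this]
      exact chains_congruent R F A e hmul huni (k+1) y _ _ hch1 hch2
    · -- inductive step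
      obtain ⟨b, hxb, hby⟩ := exists_covBy_between (show (x:Γ) < (y:Γ) from hxy)
      have hrb : R.rk ↑y = R.rk b + 1 := R.rk_covBy hby
      have hrx1 : 1 ≤ R.rk ↑x := one_le_rk R x.2
      have hbst : b ≠ R.star := ne_star_of_rk R (by omega)
      have hxblt : (x:Γ) < b := lt_of_le_of_ne hxb (by intro h; rw [← h] at hrb; omega)
      set bb : Lp R := ⟨b, hbst⟩
      have hchb : Chn R bb j (stdChain R bb j) :=
        stdChain_chn R j bb (by omega) (show j ≤ R.rk b by omega)
      have hchbk : Chn R bb (j+k) (stdChain R bb (j+k)) :=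
        stdChain_chn R (j+k) bb (by omega) (show j + k ≤ R.rk b by omega)
      have hchy1 : Chn R y (j+1) (stdChain R y (j+1)) :=
        stdChain_chn R (j+1) y (by omega) (by omega)
      have hchy2 : Chn R y (j+1) (y :: stdChain R bb j) := Chn.cons y hby hchb
      have S1 : ω R F A e (stdChain R y (j+1) ++ lx) -
          ω R F A e ((y :: stdChain R bb j) ++ lx) ∈ SJ R F A e := by
        rw [ω_append, ω_append, ← sub_mul]
        exact SJ_mul_right R F A e _
          (chains_congruent R F A e hmul huni (j+1) y _ _ hchy1 hchy2)
      have S2 : ω R F A e ((y :: stdChain R bb j) ++ lx) -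
          ω R F A e (y :: stdChain R bb (j+k)) ∈ SJ R F A e := by
        have h1 : (y :: stdChain R bb j) ++ lx = y :: (stdChain R bb j ++ lx) := rfl
        rw [h1, ω_cons, ω_cons, ← mul_sub]
        exact SJ_mul_left R F A e _
          (ihj (by omega) x bb hxblt (show j = R.rk b - R.rk ↑x by omega) k lx hlx)
      have S3 : ω R F A e (y :: stdChain R bb (j+k)) -
          ω R F A e (stdChain R y (j+1+k)) ∈ SJ R F A e := by
        have hchy3 : Chn R y (j+k+1) (y :: stdChain R bb (j+k)) := Chn.cons y hby hchbk
        have hchy4 : Chn R y (j+k+1) (stdChain R y (j+k+1)) :=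
          stdChain_chn R (j+k+1) y (by omega) (by omega)
        have harr : j+1+k = j+k+1 := by omega
        rw [harr]
        exact chains_congruent R F A e hmul huni (j+k+1) y _ _ hchy3 hchy4
      have hsum := Submodule.add_mem _ (Submodule.add_mem _ S1 S2) S3
      rw [sub_add_sub_cancel, sub_add_sub_cancel] at hsum
      exact hsum

open scoped Classical in
/-- Prepend `(y,j)` to a good list, merging as long as possible. -/
noncomputable def insP : Γ → ℕ → List (Γ × ℕ) → List (Γ × ℕ)
  | y, j, [] => [(y, j)]
  | y, j, (x, k) :: t =>
    if x < y ∧ j = R.rk y - R.rk x then insP y (j+k) t else (y,j) :: (x,k) :: t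

lemma isGoodList_tail {p : Γ × ℕ} {t : List (Γ × ℕ)} (h : IsGoodList R (p :: t)) :
    IsGoodList R t :=
  ⟨fun q hq => h.1 q (List.mem_cons_of_mem p hq), h.2.tail⟩

lemma insP_good : ∀ (t : List (Γ × ℕ)), IsGoodList R t → ∀ (y : Γ) (j : ℕ),
    y ≠ R.star → 1 ≤ j → j ≤ R.rk y → IsGoodList R (insP R y j t) := by
  intro t
  induction t with
  | nil =>
    intro _ y j hy h1 h2
    refine ⟨?_, ?_⟩
    · rintro p hp
      simp only [insP, List.mem_singleton] at hp
      subst hp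
      exact ⟨hy, h1, h2⟩
    · simp [insP, List.Chain']
  | cons p t iht =>
    intro hgood y j hy h1 h2
    obtain ⟨x, k⟩ := p
    have hxk : x ≠ R.star ∧ 1 ≤ k ∧ k ≤ R.rk x := hgood.1 (x, k) (List.mem_cons_self)
    by_cases hc : x < y ∧ j = R.rk y - R.rk x
    · rw [insP, if_pos hc]
      have hrxy : R.rk x < R.rk y := R.rk_strictMono hc.1
      exact iht (isGoodList_tail R hgood) y (j+k) hy (by omega) (by omega)
    · rw [insP, if_neg hc]
      refine ⟨?_, ?_⟩
      · rintro q hq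
        rcases List.mem_cons.mp hq with rfl | hq2
        · exact ⟨hy, h1, h2⟩
        · exact hgood.1 q hq2
      · exact List.isChain_cons_cons.mpr ⟨by simpa using hc, hgood.2⟩

/-- The product of the `e`'s indexed by a list. -/
def gmL (l : List (Γ × ℕ)) : A := (l.map fun p => e p.1 p.2).prod

include hmul in
lemma insP_gm : ∀ (t : List (Γ × ℕ)), IsGoodList R t → ∀ (y : Γ) (j : ℕ),
    y ≠ R.star → 1 ≤ j → j ≤ R.rk y →
    gmL A e (insP R y j t) = e y j * gmL A e t := by
  intro t
  induction t with
  | nil => intro _ y j _ _ _; simp [insP, gmL]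
  | cons p t iht =>
    intro hgood y j hy h1 h2
    obtain ⟨x, k⟩ := p
    have hxk : x ≠ R.star ∧ 1 ≤ k ∧ k ≤ R.rk x := hgood.1 (x, k) (List.mem_cons_self)
    by_cases hc : x < y ∧ j = R.rk y - R.rk x
    · rw [insP, if_pos hc]
      have hrxy : R.rk x < R.rk y := R.rk_strictMono hc.1
      rw [iht (isGoodList_tail R hgood) y (j+k) hy (by omega) (by omega)]
      have hgm : gmL A e ((x,k) :: t) = e x k * gmL A e t := by simp [gmL]
      rw [hgm, ← mul_assoc, hmul y x j k hxk.1 hc.1 hc.2 hxk.2.1 hxk.2.2]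
    · rw [insP, if_neg hc]
      simp [gmL]

open scoped Classical in
/-- The standard chain word for `e x k`. -/
noncomputable def stdChainG (x : Γ) (k : ℕ) : List (Lp R) :=
  if h : x ≠ R.star then stdChain R ⟨x, h⟩ k else []

lemma stdChainG_chn {x : Γ} (hx : x ≠ R.star) {k : ℕ} (h1 : 1 ≤ k) (h2 : k ≤ R.rk x) :
    Chn R ⟨x, hx⟩ k (stdChainG R x k) := by
  rw [stdChainG, dif_pos hx]
  exact stdChain_chn R k ⟨x, hx⟩ h1 h2

lemma stdChainG_one (y : Lp R) : stdChainG R ↑y 1 = [y] := by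
  rw [stdChainG, dif_pos y.2]
  simp [stdChain]

/-- The word associated to a list of index pairs. -/
noncomputable def wordOf : List (Γ × ℕ) → List (Lp R)
  | [] => []
  | p :: t => stdChainG R p.1 p.2 ++ wordOf t

include hmul in
lemma insP_w (huni : R.Uniform) : ∀ (t : List (Γ × ℕ)), IsGoodList R t →
    ∀ (y : Γ) (j : ℕ), y ≠ R.star → 1 ≤ j → j ≤ R.rk y →
    ω R F A e (stdChainG R y j ++ wordOf R t) - ω R F A e (wordOf R (insP R y j t))
      ∈ SJ R F A e := by
  intro t
  induction t with
  | nil =>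
    intro _ y j _ _ _
    have h1 : insP R y j [] = [(y,j)] := rfl
    have h2 : wordOf R [(y,j)] = stdChainG R y j ++ [] := rfl
    rw [h1, h2]
    have h3 : wordOf R ([] : List (Γ × ℕ)) = [] := rfl
    rw [h3]
    simpa using (SJ R F A e).zero_mem
  | cons p t iht =>
    intro hgood y j hy h1 h2
    obtain ⟨x, k⟩ := p
    have hxk : x ≠ R.star ∧ 1 ≤ k ∧ k ≤ R.rk x := hgood.1 (x, k) (List.mem_cons_self)
    by_cases hc : x < y ∧ j = R.rk y - R.rk x
    · rw [insP, if_pos hc]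
      have hrxy : R.rk x < R.rk y := R.rk_strictMono hc.1
      have hchx : Chn R ⟨x, hxk.1⟩ k (stdChainG R x k) :=
        stdChainG_chn R hxk.1 hxk.2.1 hxk.2.2
      have hM := merge_congruent R F A e hmul huni j h1 ⟨x, hxk.1⟩ ⟨y, hy⟩
        hc.1 hc.2 k (stdChainG R x k) hchx
      have hw : wordOf R ((x,k) :: t) = stdChainG R x k ++ wordOf R t := rfl
      have heq : stdChainG R y j ++ wordOf R ((x,k) :: t)
          = (stdChain R ⟨y, hy⟩ j ++ stdChainG R x k) ++ wordOf R t := by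
        rw [hw, stdChainG, dif_pos hy, List.append_assoc]
      have S1 : ω R F A e (stdChainG R y j ++ wordOf R ((x,k) :: t)) -
          ω R F A e (stdChain R ⟨y, hy⟩ (j+k) ++ wordOf R t) ∈ SJ R F A e := by
        rw [heq, ω_append R F A e (stdChain R ⟨y, hy⟩ j ++ stdChainG R x k) (wordOf R t),
          ω_append R F A e (stdChain R ⟨y, hy⟩ (j+k)) (wordOf R t), ← sub_mul]
        exact SJ_mul_right R F A e _ hM
      have S2 : ω R F A e (stdChain R ⟨y, hy⟩ (j+k) ++ wordOf R t) -
          ω R F A e (wordOf R (insP R y (j+k) t)) ∈ SJ R F A e := by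
        have := iht (isGoodList_tail R hgood) y (j+k) hy (by omega) (by omega)
        rwa [stdChainG, dif_pos hy] at this
      have hsum := Submodule.add_mem _ S1 S2
      rwa [sub_add_sub_cancel] at hsum
    · rw [insP, if_neg hc]
      have hw : wordOf R ((y,j) :: (x,k) :: t)
          = stdChainG R y j ++ wordOf R ((x,k) :: t) := rfl
      rw [hw]
      simpa using (SJ R F A e).zero_mem

/-- Reduction of a word to a good list. -/
noncomputable def redL : List (Lp R) → List (Γ × ℕ)
  | [] => []
  | y :: t => insP R ↑y 1 (redL t)

lemma redL_good : ∀ w : List (Lp R), IsGoodList R (redL R w) := by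
  intro w
  induction w with
  | nil => exact ⟨by simp [redL], by simp [redL, List.Chain']⟩
  | cons y t iht =>
    exact insP_good R (redL R t) iht ↑y 1 y.2 le_rfl (one_le_rk R y.2)

include hmul in
lemma redL_gm : ∀ w : List (Lp R), eW R A e w = gmL A e (redL R w) := by
  intro w
  induction w with
  | nil => simp [eW, redL, gmL]
  | cons y t iht =>
    have h1 : eW R A e (y :: t) = e ↑y 1 * eW R A e t := by simp [eW]
    rw [h1, iht]
    exact (insP_gm R A e hmul (redL R t) (redL_good R t) ↑y 1 y.2 le_rfl
      (one_le_rk R y.2)).symm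

include hmul in
lemma redL_w (huni : R.Uniform) : ∀ w : List (Lp R),
    ω R F A e w - ω R F A e (wordOf R (redL R w)) ∈ SJ R F A e := by
  intro w
  induction w with
  | nil => simpa [redL, wordOf] using (SJ R F A e).zero_mem
  | cons y t iht =>
    have S1 : ω R F A e (y :: t) -
        ω R F A e (y :: wordOf R (redL R t)) ∈ SJ R F A e := by
      rw [ω_cons, ω_cons, ← mul_sub]
      exact SJ_mul_left R F A e _ iht
    have S2 : ω R F A e (y :: wordOf R (redL R t)) -
        ω R F A e (wordOf R (insP R ↑y 1 (redL R t))) ∈ SJ R F A e := by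
      have h1 : (y :: wordOf R (redL R t)) = stdChainG R ↑y 1 ++ wordOf R (redL R t) := by
        rw [stdChainG_one]
        rfl
      rw [h1]
      exact insP_w R F A e hmul huni (redL R t) (redL_good R t) ↑y 1 y.2 le_rfl
        (one_le_rk R y.2)
    have hsum := Submodule.add_mem _ S1 S2
    rw [sub_add_sub_cancel] at hsum
    exact hsum

end MergeIns

section BasisAux
variable {Γ : Type} [PartialOrder Γ] [Fintype Γ] (R : RankedPoset Γ)
  (F : Type) [Field F] (A : Type) [Ring A] [Algebra F A] (e : Γ → ℕ → A)

lemma good_single {x : Γ} (hx : x ≠ R.star) : IsGoodList R [(x, 1)] := by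
  refine ⟨?_, by simp [List.Chain']⟩
  rintro p hp
  simp only [List.mem_singleton] at hp
  subst hp
  exact ⟨hx, le_rfl, one_le_rk R hx⟩

variable (hli : LinearIndependent F (goodMonomial R A e))

include hli in
lemma li_fam0 : LinearIndependent F (fun x : Lp R => e ↑x 1) := by
  have hinj : Function.Injective
      (fun x : Lp R => (⟨[(↑x, 1)], good_single R x.2⟩ : {l : List (Γ × ℕ) // IsGoodList R l})) := by
    intro x y h
    simp only [Subtype.mk.injEq, List.cons.injEq, Prod.mk.injEq] at h
    exact Subtype.ext h.1.1
  have h2 := hli.comp _ hinj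
  have h3 : (goodMonomial R A e ∘ fun x : Lp R =>
      (⟨[(↑x, 1)], good_single R x.2⟩ : {l : List (Γ × ℕ) // IsGoodList R l}))
      = fun x : Lp R => e ↑x 1 := by
    funext x
    simp [goodMonomial]
  rwa [h3] at h2

include hli in
lemma li_vG : LinearIndependent F (vG R F A e) := by
  apply LinearIndependent.of_comp (genOne R A e F).subtype
  exact li_fam0 R F A e hli

lemma genOne_eq_span :
    genOne R A e F = Submodule.span F (Set.range (fun x : Lp R => e ↑x 1)) := by
  unfold genOne
  congr 1
  ext a
  constructor
  · rintro ⟨x, hx, rfl⟩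
    exact ⟨⟨x, hx⟩, rfl⟩
  · rintro ⟨⟨x, hx⟩, rfl⟩
    exact ⟨x, hx, rfl⟩

/-- A basis of `A₁` indexed by `Γ₊`. -/
noncomputable def bV : Module.Basis (Lp R) F ↥(genOne R A e F) :=
  (Module.Basis.span (li_fam0 R F A e hli)).map
    (LinearEquiv.ofEq _ _ (genOne_eq_span R F A e).symm)

lemma bV_apply (x : Lp R) : bV R F A e hli x = vG R F A e x := by
  apply Subtype.ext
  have h1 : (Module.Basis.span (li_fam0 R F A e hli) x : A) = e ↑x 1 := by
    rw [Module.Basis.span_apply]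
  simp [bV, h1, vG]

/-- The basis of words of the tensor algebra `T(A₁)`. -/
noncomputable def BW : Module.Basis (FreeMonoid (Lp R)) F (TensorAlgebra F ↥(genOne R A e F)) :=
  (FreeAlgebra.basisFreeMonoid F (Lp R)).map
    (TensorAlgebra.equivFreeAlgebra (bV R F A e hli)).symm.toLinearEquiv

lemma basisFreeMonoid_apply (w : FreeMonoid (Lp R)) :
    FreeAlgebra.basisFreeMonoid F (Lp R) w
      = (FreeAlgebra.equivMonoidAlgebraFreeMonoid (R := F) (X := Lp R)).symm
        (MonoidAlgebra.single w 1) := by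
  simp only [FreeAlgebra.basisFreeMonoid, Module.Basis.map_apply]
  rfl

lemma BW_apply (w : FreeMonoid (Lp R)) :
    BW R F A e hli w = ω R F A e (FreeMonoid.toList w) := by
  have key : ∀ l : List (Lp R),
      BW R F A e hli (FreeMonoid.ofList l) = ω R F A e l := by
    intro l
    induction l with
    | nil =>
      have h1 : (FreeMonoid.ofList ([] : List (Lp R))) = 1 := rfl
      rw [h1]
      have h2 : FreeAlgebra.basisFreeMonoid F (Lp R) (1 : FreeMonoid (Lp R)) = 1 := by
        rw [basisFreeMonoid_apply]
        have : (MonoidAlgebra.single (1 : FreeMonoid (Lp R)) (1:F))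
            = (1 : MonoidAlgebra F (FreeMonoid (Lp R))) := rfl
        rw [this, map_one]
      simp only [BW, Module.Basis.map_apply, AlgEquiv.toLinearEquiv_apply]
      rw [h2, map_one, ω_nil]
    | cons x t ih =>
      have h1 : FreeMonoid.ofList (x :: t) = FreeMonoid.of x * FreeMonoid.ofList t := rfl
      have h2 : FreeAlgebra.basisFreeMonoid F (Lp R) (FreeMonoid.of x * FreeMonoid.ofList t)
          = FreeAlgebra.ι F x * FreeAlgebra.basisFreeMonoid F (Lp R) (FreeMonoid.ofList t) := by
        rw [basisFreeMonoid_apply, basisFreeMonoid_apply]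
        have h3 : (MonoidAlgebra.single (FreeMonoid.of x * FreeMonoid.ofList t) (1:F))
            = MonoidAlgebra.single (FreeMonoid.of x) (1:F)
              * MonoidAlgebra.single (FreeMonoid.ofList t) (1:F) := by
          rw [MonoidAlgebra.single_mul_single, one_mul]
        rw [h3, map_mul]
        congr 1
        have h4 : FreeAlgebra.equivMonoidAlgebraFreeMonoid (R := F) (X := Lp R)
            (FreeAlgebra.ι F x) = MonoidAlgebra.single (FreeMonoid.of x) (1:F) := by
          simp [FreeAlgebra.equivMonoidAlgebraFreeMonoid]
        rw [← h4, AlgEquiv.symm_apply_apply]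
      simp only [BW, Module.Basis.map_apply, AlgEquiv.toLinearEquiv_apply] at ih ⊢
      rw [h1, h2, map_mul, ih, ω_cons]
      congr 1
      rw [TensorAlgebra.equivFreeAlgebra_symm_ι (bV R F A e hli) x, bV_apply]
  have := key (FreeMonoid.toList w)
  rwa [FreeMonoid.ofList_toList] at this

end BasisAux

section KerSub
variable {Γ : Type} [PartialOrder Γ] [Fintype Γ] (R : RankedPoset Γ)
  (F : Type) [Field F] (A : Type) [Ring A] [Algebra F A] (e : Γ → ℕ → A)
  (hli : LinearIndependent F (goodMonomial R A e))
  (hmul : ∀ x y : Γ, ∀ j k : ℕ, y ≠ R.star → y < x → j = R.rk x - R.rk y →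
      1 ≤ k → k ≤ R.rk y → e x j * e y k = e x (j + k))

include hmul in
lemma e_mem_range {x : Γ} {k : ℕ} (hx : x ≠ R.star) (h1 : 1 ≤ k) (h2 : k ≤ R.rk x) :
    e x k ∈ Set.range (canMap R A e F) := by
  refine ⟨ω R F A e (stdChainG R x k), ?_⟩
  rw [canMap_ω]
  exact (stdChainG_chn R hx h1 h2).eW_eq R A e hmul

include hmul in
lemma canMap_surjective
    (hspan : Submodule.span F (Set.range (goodMonomial R A e)) = ⊤) :
    Function.Surjective (canMap R A e F) := by
  intro a
  have hmem : a ∈ Submodule.span F (Set.range (goodMonomial R A e)) := by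
    rw [hspan]; exact Submodule.mem_top
  have key : ∀ l : List (Γ × ℕ), (∀ p ∈ l, p.1 ≠ R.star ∧ 1 ≤ p.2 ∧ p.2 ≤ R.rk p.1) →
      gmL A e l ∈ (canMap R A e F).range := by
    intro l
    induction l with
    | nil => intro _; simpa [gmL] using Subalgebra.one_mem (canMap R A e F).range
    | cons p t iht =>
      intro hall
      have hp := hall p (List.mem_cons_self)
      have hgm : gmL A e (p :: t) = e p.1 p.2 * gmL A e t := by simp [gmL]
      rw [hgm]
      exact Subalgebra.mul_mem _ (e_mem_range R F A e hmul hp.1 hp.2.1 hp.2.2)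
        (iht (fun q hq => hall q (List.mem_cons_of_mem _ hq)))
  have hmem2 : a ∈ (canMap R A e F).range := by
    refine Submodule.span_induction ?_ ?_ ?_ ?_ hmem
    · rintro _ ⟨⟨l, hl⟩, rfl⟩
      exact key l hl.1
    · exact Subalgebra.zero_mem _
    · intro u v _ _ hu hv
      exact Subalgebra.add_mem _ hu hv
    · intro r u _ hu
      exact Subalgebra.smul_mem _ hu r
  exact hmem2

include hli hmul in
lemma ker_le_SJ (huni : R.Uniform) (z : TensorAlgebra F ↥(genOne R A e F))
    (hz : canMap R A e F z = 0) : z ∈ SJ R F A e := by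
  classical
  set B := BW R F A e hli with hB
  set c := B.repr z with hcdef
  set gls : FreeMonoid (Lp R) → {l : List (Γ × ℕ) // IsGoodList R l} :=
    fun w => ⟨redL R (FreeMonoid.toList w), redL_good R _⟩ with hgls
  set hfw : FreeMonoid (Lp R) → TensorAlgebra F ↥(genOne R A e F) :=
    fun w => ω R F A e (wordOf R (redL R (FreeMonoid.toList w))) with hhf
  have hzs : z = Finsupp.linearCombination F B c := (B.linearCombination_repr z).symm
  set s := Finsupp.linearCombination F hfw c with hs
  have hdiff : z - s ∈ SJ R F A e := by
    rw [hzs, hs, Finsupp.linearCombination_apply, Finsupp.linearCombination_apply,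
      Finsupp.sum, Finsupp.sum, ← Finset.sum_sub_distrib]
    apply Submodule.sum_mem
    intro w _
    rw [← smul_sub]
    refine Submodule.smul_mem _ _ ?_
    rw [BW_apply]
    exact redL_w R F A e hmul huni (FreeMonoid.toList w)
  have hφs : canMap R A e F s = 0 := by
    have h1 := canMap_eq_zero_of_mem_SJ R F A e hdiff
    rw [map_sub, hz, zero_sub, neg_eq_zero] at h1
    exact h1
  have hφh : ∀ w, canMap R A e F (hfw w) = goodMonomial R A e (gls w) := by
    intro w
    have hmem := redL_w R F A e hmul huni (FreeMonoid.toList w)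
    have h0 := canMap_eq_zero_of_mem_SJ R F A e hmem
    rw [map_sub, sub_eq_zero] at h0
    rw [← h0, canMap_ω, redL_gm R A e hmul]
    rfl
  have hφs2 : Finsupp.linearCombination F (goodMonomial R A e)
      (Finsupp.mapDomain gls c) = 0 := by
    rw [Finsupp.linearCombination_mapDomain]
    have : (goodMonomial R A e ∘ gls) = fun w => canMap R A e F (hfw w) := by
      funext w; rw [hφh]; rfl
    rw [this]
    have : (Finsupp.linearCombination F fun w => canMap R A e F (hfw w)) c
        = canMap R A e F s := by
      rw [hs]
      exact (Finsupp.apply_linearCombination F ((canMap R A e F).toLinearMap) hfw c).symm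
    rw [this, hφs]
  have hmd : Finsupp.mapDomain gls c = 0 := linearIndependent_iff.mp hli _ hφs2
  have hs0 : s = 0 := by
    have h1 : s = Finsupp.linearCombination F
        (fun l : {l : List (Γ × ℕ) // IsGoodList R l} => ω R F A e (wordOf R l.1))
        (Finsupp.mapDomain gls c) := by
      rw [Finsupp.linearCombination_mapDomain, hs]
      rfl
    rw [h1, hmd, map_zero]
  rw [hs0, sub_zero] at hdiff
  exact hdiff

end KerSub

section MapDomainKer

lemma mapDomain_ker {κ μ F : Type} [Field F] (c : κ → μ) :
    ∀ n : ℕ, ∀ d : κ →₀ F, d.support.card ≤ n → Finsupp.mapDomain c d = 0 →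
      d ∈ Submodule.span F {f : κ →₀ F | ∃ p q, c p = c q ∧
        f = Finsupp.single p 1 - Finsupp.single q 1} := by
  classical
  intro n
  induction n with
  | zero =>
    intro d hcard _
    have : d = 0 := by
      rw [← Finsupp.support_eq_empty]
      exact Finset.card_eq_zero.mp (by omega)
    rw [this]
    exact Submodule.zero_mem _
  | succ n ih =>
    intro d hcard hmd
    rcases eq_or_ne d 0 with rfl | hd0
    · exact Submodule.zero_mem _
    · obtain ⟨p, hp⟩ := Finsupp.support_nonempty_iff.mpr hd0
      have heval : ∑ a ∈ d.support, (if c a = c p then d a else 0) = 0 := by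
        have h1 : Finsupp.mapDomain c d (c p) = 0 := by rw [hmd]; rfl
        rw [Finsupp.mapDomain, Finsupp.sum, Finsupp.finset_sum_apply] at h1
        have h2 : ∑ a ∈ d.support, (if c a = c p then d a else 0)
            = ∑ a ∈ d.support, (Finsupp.single (c a) (d a)) (c p) :=
          Finset.sum_congr rfl (fun a _ => (Finsupp.single_apply).symm)
        rw [h2]
        exact h1
      have hq : ∃ q ∈ d.support, q ≠ p ∧ c q = c p := by
        by_contra hno
        push_neg at hno
        have : ∑ a ∈ d.support, (if c a = c p then d a else 0) = d p := by
          rw [Finset.sum_eq_single p]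
          · simp
          · intro b hb hbp
            rw [if_neg (hno b hb hbp)]
          · intro hnp
            exact absurd hp hnp
        rw [this] at heval
        exact (Finsupp.mem_support_iff.mp hp) heval
      obtain ⟨q, hqs, hqp, hcq⟩ := hq
      set g : κ →₀ F := Finsupp.single p 1 - Finsupp.single q 1 with hg
      set d' : κ →₀ F := d - d p • g with hd'
      have hd'p : d' p = 0 := by
        simp [hd', hg, Finsupp.single_apply, hqp]
      have hsupp : d'.support ⊆ d.support.erase p := by
        intro r hr
        have hr0 : d' r ≠ 0 := Finsupp.mem_support_iff.mp hr
        rcases eq_or_ne r p with rfl | hrp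
        · exact absurd hd'p hr0
        · rw [Finset.mem_erase]
          refine ⟨hrp, ?_⟩
          rcases eq_or_ne r q with rfl | hrq
          · exact hqs
          · rw [Finsupp.mem_support_iff]
            intro hdr
            apply hr0
            simp [hd', hg, Finsupp.single_apply, hdr, Ne.symm hrp, Ne.symm hrq]
      have hcard' : d'.support.card ≤ n := by
        have h1 : d'.support.card ≤ (d.support.erase p).card := Finset.card_le_card hsupp
        have h2 : (d.support.erase p).card < d.support.card :=
          Finset.card_erase_lt_of_mem hp
        omega
      have hmd' : Finsupp.mapDomain c d' = 0 := by
        have hlin : Finsupp.mapDomain c d' =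
            Finsupp.mapDomain c d - d p • Finsupp.mapDomain c g := by
          rw [hd']
          rw [show Finsupp.mapDomain c (d - d p • g)
              = Finsupp.lmapDomain F F c (d - d p • g) from rfl]
          rw [map_sub, map_smul]
          rfl
        have hgz : Finsupp.mapDomain c g = 0 := by
          rw [hg, show Finsupp.mapDomain c (Finsupp.single p 1 - Finsupp.single q 1)
              = Finsupp.lmapDomain F F c (Finsupp.single p 1 - Finsupp.single q 1) from rfl,
            map_sub]
          have e1 : Finsupp.lmapDomain F F c (Finsupp.single p (1:F))
              = Finsupp.single (c p) 1 := Finsupp.mapDomain_single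
          have e2 : Finsupp.lmapDomain F F c (Finsupp.single q (1:F))
              = Finsupp.single (c q) 1 := Finsupp.mapDomain_single
          rw [e1, e2, hcq, sub_self]
        rw [hlin, hgz, hmd]
        simp
      have hmem' := ih d' hcard' hmd'
      have hgen : g ∈ Submodule.span F {f : κ →₀ F | ∃ p q, c p = c q ∧
          f = Finsupp.single p 1 - Finsupp.single q 1} :=
        Submodule.subset_span ⟨p, q, hcq.symm, hg⟩
      have : d = d' + d p • g := by rw [hd']; abel
      rw [this]
      exact Submodule.add_mem _ hmem' (Submodule.smul_mem _ _ hgen)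

end MapDomainKer

section GChar
variable {Γ : Type} [PartialOrder Γ] [Fintype Γ] (R : RankedPoset Γ)
  (F : Type) [Field F] (A : Type) [Ring A] [Algebra F A] (e : Γ → ℕ → A)
  (hli : LinearIndependent F (goodMonomial R A e))
  (hmul : ∀ x y : Γ, ∀ j k : ℕ, y ≠ R.star → y < x → j = R.rk x - R.rk y →
      1 ≤ k → k ≤ R.rk y → e x j * e y k = e x (j + k))

/-- The two letter words. -/
noncomputable def W2 (p : Lp R × Lp R) : TensorAlgebra F ↥(genOne R A e F) :=
  ω R F A e [p.1, p.2]

include hli in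
lemma degTwo_le_spanW2 :
    degTwo R A e F ≤ Submodule.span F (Set.range (W2 R F A e)) := by
  rw [degTwo, Submodule.span_le]
  rintro _ ⟨u, v, rfl⟩
  have hι : ∀ m : ↥(genOne R A e F), TensorAlgebra.ι F m ∈
      Submodule.span F (Set.range fun x : Lp R => TensorAlgebra.ι F (vG R F A e x)) := by
    intro m
    have hbv : ⇑(bV R F A e hli) = vG R F A e := funext (bV_apply R F A e hli)
    have hm : m ∈ Submodule.span F (Set.range (vG R F A e)) := by
      rw [← hbv, Module.Basis.span_eq]
      exact Submodule.mem_top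
    have hmap := Submodule.mem_map_of_mem (f := TensorAlgebra.ι F) hm
    rw [Submodule.map_span, ← Set.range_comp] at hmap
    exact hmap
  refine Submodule.span_induction₂
    (p := fun x y _ _ => x * y ∈ Submodule.span F (Set.range (W2 R F A e)))
    ?_ ?_ ?_ ?_ ?_ ?_ ?_ (hι u) (hι v)
  · rintro _ _ ⟨x, rfl⟩ ⟨y, rfl⟩
    refine Submodule.subset_span ⟨(x, y), ?_⟩
    simp [W2, ω]
  · intro y _; rw [zero_mul]; exact Submodule.zero_mem _
  · intro x _; rw [mul_zero]; exact Submodule.zero_mem _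
  · intro x y z _ _ _ h1 h2; rw [add_mul]; exact Submodule.add_mem _ h1 h2
  · intro x y z _ _ _ h1 h2; rw [mul_add]; exact Submodule.add_mem _ h1 h2
  · intro r x y _ _ h; rw [smul_mul_assoc]; exact Submodule.smul_mem _ _ h
  · intro r x y _ _ h; rw [mul_smul_comm]; exact Submodule.smul_mem _ _ h

open scoped Classical in
/-- Classification map for two letter words. -/
noncomputable def cgl (p : Lp R × Lp R) : {l : List (Γ × ℕ) // IsGoodList R l} :=
  if h : (p.2 : Γ) ⋖ (p.1 : Γ) then
    ⟨[(↑p.1, 2)], by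
      refine ⟨?_, by simp [List.Chain']⟩
      rintro q hq
      simp only [List.mem_singleton] at hq
      subst hq
      have h1 := R.rk_covBy h
      have h2 := one_le_rk R p.2.2
      exact ⟨p.1.2, show (1:ℕ) ≤ 2 by omega, show (2:ℕ) ≤ R.rk ↑p.1 by omega⟩⟩
  else
    ⟨[(↑p.1, 1), (↑p.2, 1)], by
      refine ⟨?_, ?_⟩
      · rintro q hq
        rcases List.mem_cons.mp hq with rfl | hq2
        · exact ⟨p.1.2, le_rfl, one_le_rk R p.1.2⟩
        · simp only [List.mem_singleton] at hq2
          subst hq2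
          exact ⟨p.2.2, le_rfl, one_le_rk R p.2.2⟩
      · refine List.isChain_cons_cons.mpr ⟨?_, by simp⟩
        rintro ⟨hlt, hrk⟩
        have hrk' : 1 = R.rk ↑p.1 - R.rk ↑p.2 := hrk
        exact h (covBy_of_lt_rk R hlt (by
          have := R.rk_strictMono hlt
          omega))⟩

include hmul in
lemma canMap_W2 (p : Lp R × Lp R) :
    canMap R A e F (W2 R F A e p) = goodMonomial R A e (cgl R p) := by
  rw [W2, canMap_ω]
  by_cases h : (p.2 : Γ) ⋖ (p.1 : Γ)
  · rw [cgl, dif_pos h]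
    have hrk := R.rk_covBy h
    have heW : eW R A e [p.1, p.2] = e ↑p.1 1 * e ↑p.2 1 := by simp [eW]
    rw [heW, hmul ↑p.1 ↑p.2 1 1 p.2.2 h.1 (by omega) le_rfl (one_le_rk R p.2.2)]
    simp [goodMonomial]
  · rw [cgl, dif_neg h]
    simp [eW, goodMonomial]

include hli hmul in
lemma ker_degTwo_char {g : TensorAlgebra F ↥(genOne R A e F)}
    (hg0 : canMap R A e F g = 0) (hg2 : g ∈ degTwo R A e F) :
    g ∈ Submodule.span F {t | ∃ z α β : Lp R, (α:Γ) ⋖ (z:Γ) ∧ (β:Γ) ⋖ (z:Γ) ∧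
      t = ω R F A e [z, α] - ω R F A e [z, β]} := by
  classical
  have hg2' := degTwo_le_spanW2 R F A e hli hg2
  obtain ⟨d, rfl⟩ := Finsupp.mem_span_range_iff_exists_finsupp.mp hg2'
  have hlc : d.sum (fun p a => a • W2 R F A e p)
      = Finsupp.linearCombination F (W2 R F A e) d := rfl
  have hφ : Finsupp.linearCombination F (goodMonomial R A e)
      (Finsupp.mapDomain (cgl R) d) = 0 := by
    rw [Finsupp.linearCombination_mapDomain]
    have h1 : (goodMonomial R A e ∘ cgl R) = fun p => canMap R A e F (W2 R F A e p) := by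
      funext p
      simp only [Function.comp_apply]
      exact (canMap_W2 R F A e hmul p).symm
    rw [h1]
    have h2 : (Finsupp.linearCombination F fun p => canMap R A e F (W2 R F A e p)) d
        = canMap R A e F (d.sum fun p a => a • W2 R F A e p) := by
      rw [hlc]
      exact (Finsupp.apply_linearCombination F ((canMap R A e F).toLinearMap)
        (W2 R F A e) d).symm
    rw [h2, hg0]
  have hmd : Finsupp.mapDomain (cgl R) d = 0 := linearIndependent_iff.mp hli _ hφ
  have hdmem := mapDomain_ker (cgl R) d.support.card d le_rfl hmd
  -- now push through the linear map `linearCombination F (W2)`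
  have himg := Submodule.mem_map_of_mem
    (f := Finsupp.linearCombination F (W2 R F A e)) hdmem
  rw [Submodule.map_span] at himg
  rw [hlc]
  refine Submodule.span_le.mpr ?_ himg
  rintro _ ⟨f, ⟨p, q, hpq, rfl⟩, rfl⟩
  rw [map_sub, Finsupp.linearCombination_single, Finsupp.linearCombination_single,
    one_smul, one_smul]
  by_cases hp : (p.2 : Γ) ⋖ (p.1 : Γ) <;> by_cases hq' : (q.2 : Γ) ⋖ (q.1 : Γ)
  · -- both merge: heads equal
    have hlist : ([(↑p.1, 2)] : List (Γ × ℕ)) = [(↑q.1, 2)] := by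
      have := congrArg Subtype.val hpq
      rwa [cgl, dif_pos hp, cgl, dif_pos hq'] at this
    have h11' : p.1 = q.1 := Subtype.ext (by
      have := List.head_eq_of_cons_eq hlist
      simpa using this)
    refine Submodule.subset_span ⟨p.1, p.2, q.2, hp, ?_, ?_⟩
    · rw [h11']; exact hq'
    · rw [W2, W2, h11']
  · exfalso
    have hv := congrArg Subtype.val hpq
    rw [cgl, dif_pos hp, cgl, dif_neg hq'] at hv
    have := congrArg List.length hv
    simp at this
  · exfalso
    have hv := congrArg Subtype.val hpq
    rw [cgl, dif_neg hp, cgl, dif_pos hq'] at hv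
    have := congrArg List.length hv
    simp at this
  · have hv := congrArg Subtype.val hpq
    rw [cgl, dif_neg hp, cgl, dif_neg hq'] at hv
    have h1 : ((↑p.1 : Γ), 1) = ((↑q.1 : Γ), 1) := List.head_eq_of_cons_eq hv
    have h2 : ((↑p.2 : Γ), 1) = ((↑q.2 : Γ), 1) :=
      List.head_eq_of_cons_eq (List.tail_eq_of_cons_eq hv)
    have hpeq : p = q := Prod.ext (Subtype.ext (congrArg Prod.fst h1))
      (Subtype.ext (congrArg Prod.fst h2))
    rw [hpeq, sub_self]
    exact Submodule.zero_mem _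

end GChar

section LamSec
variable {Γ : Type} [PartialOrder Γ] [Fintype Γ] (R : RankedPoset Γ)
  (F : Type) [Field F] (A : Type) [Ring A] [Algebra F A] (e : Γ → ℕ → A)
  (hli : LinearIndependent F (goodMonomial R A e))
  (hmul : ∀ x y : Γ, ∀ j k : ℕ, y ≠ R.star → y < x → j = R.rk x - R.rk y →
      1 ≤ k → k ≤ R.rk y → e x j * e y k = e x (j + k))

lemma BW_ofList (l : List (Lp R)) :
    BW R F A e hli (FreeMonoid.ofList l) = ω R F A e l := by
  rw [BW_apply]
  rfl

lemma BW_one : BW R F A e hli 1 = 1 := by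
  rw [BW_apply]
  exact ω_nil R F A e

lemma BW_mul (u v : FreeMonoid (Lp R)) :
    BW R F A e hli u * BW R F A e hli v = BW R F A e hli (u * v) := by
  rw [BW_apply, BW_apply, BW_apply]
  exact (ω_append R F A e (FreeMonoid.toList u) (FreeMonoid.toList v)).symm

/-- The submodule generated by sandwiches of degree-two kernel elements. -/
noncomputable def NN : Submodule F (TensorAlgebra F ↥(genOne R A e F)) :=
  Submodule.span F {t | ∃ (u v : FreeMonoid (Lp R))
    (g : TensorAlgebra F ↥(genOne R A e F)),
    (canMap R A e F g = 0 ∧ g ∈ degTwo R A e F) ∧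
    t = BW R F A e hli u * g * BW R F A e hli v}

lemma NN_mul_left (r t : TensorAlgebra F ↥(genOne R A e F))
    (ht : t ∈ NN R F A e hli) : r * t ∈ NN R F A e hli := by
  have hW : ∀ w : FreeMonoid (Lp R), ∀ t ∈ NN R F A e hli,
      BW R F A e hli w * t ∈ NN R F A e hli := by
    intro w t ht
    refine Submodule.span_induction ?_ ?_ ?_ ?_ ht
    · rintro _ ⟨u, v, g, hg, rfl⟩
      refine Submodule.subset_span ⟨w * u, v, g, hg, ?_⟩
      rw [← BW_mul]
      simp [mul_assoc]
    · rw [mul_zero]; exact Submodule.zero_mem _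
    · intro x y _ _ hx hy
      rw [mul_add]; exact Submodule.add_mem _ hx hy
    · intro s x _ hx
      rw [mul_smul_comm]; exact Submodule.smul_mem _ _ hx
  have hr : r ∈ Submodule.span F (Set.range (BW R F A e hli)) := by
    rw [Module.Basis.span_eq]; exact Submodule.mem_top
  refine Submodule.span_induction ?_ ?_ ?_ ?_ hr
  · rintro _ ⟨w, rfl⟩
    exact hW w t ht
  · rw [zero_mul]; exact Submodule.zero_mem _
  · intro x y _ _ hx hy
    rw [add_mul]; exact Submodule.add_mem _ hx hy
  · intro s x _ hx
    rw [smul_mul_assoc]; exact Submodule.smul_mem _ _ hx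

lemma NN_mul_right (t r : TensorAlgebra F ↥(genOne R A e F))
    (ht : t ∈ NN R F A e hli) : t * r ∈ NN R F A e hli := by
  have hW : ∀ w : FreeMonoid (Lp R), ∀ t ∈ NN R F A e hli,
      t * BW R F A e hli w ∈ NN R F A e hli := by
    intro w t ht
    refine Submodule.span_induction ?_ ?_ ?_ ?_ ht
    · rintro _ ⟨u, v, g, hg, rfl⟩
      refine Submodule.subset_span ⟨u, v * w, g, hg, ?_⟩
      rw [← BW_mul]
      simp [mul_assoc]
    · rw [zero_mul]; exact Submodule.zero_mem _
    · intro x y _ _ hx hy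
      rw [add_mul]; exact Submodule.add_mem _ hx hy
    · intro s x _ hx
      rw [smul_mul_assoc]; exact Submodule.smul_mem _ _ hx
  have hr : r ∈ Submodule.span F (Set.range (BW R F A e hli)) := by
    rw [Module.Basis.span_eq]; exact Submodule.mem_top
  refine Submodule.span_induction ?_ ?_ ?_ ?_ hr
  · rintro _ ⟨w, rfl⟩
    exact hW w t ht
  · rw [mul_zero]; exact Submodule.zero_mem _
  · intro x y _ _ hx hy
    rw [mul_add]; exact Submodule.add_mem _ hx hy
  · intro s x _ hx
    rw [mul_smul_comm]; exact Submodule.smul_mem _ _ hx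

lemma SJ_le_NN : SJ R F A e ≤ NN R F A e hli := by
  intro t ht
  rw [mem_SJ_iff] at ht
  have := TwoSidedIdeal.mem_span_iff.mp ht
    (TwoSidedIdeal.mk' (NN R F A e hli : Set (TensorAlgebra F ↥(genOne R A e F)))
      (Submodule.zero_mem _)
      (fun h1 h2 => Submodule.add_mem _ h1 h2)
      (fun h1 => Submodule.neg_mem _ h1)
      (fun {x y} h1 => NN_mul_left R F A e hli x y h1)
      (fun {x y} h1 => NN_mul_right R F A e hli x y h1))
    (by
      intro g hg
      rw [SetLike.mem_coe, TwoSidedIdeal.mem_mk']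
      have : g = BW R F A e hli 1 * g * BW R F A e hli 1 := by
        rw [BW_one, one_mul, mul_one]
      exact Submodule.subset_span ⟨1, 1, g, hg, this⟩)
  rwa [TwoSidedIdeal.mem_mk'] at this

/-- The sibling relation through a common parent below `x0`. -/
def Rel3 (x0 : Lp R) (u v : Lp R) : Prop :=
  ∃ p : Lp R, (p:Γ) ⋖ ↑x0 ∧ (u:Γ) ⋖ ↑p ∧ (v:Γ) ⋖ ↑p

/-- The invariant predicate on words. -/
def P3 (x0 c : Lp R) : List (Lp R) → Prop
  | [w1, w2, w3] => w1 = x0 ∧ ((w2:Γ) ⋖ (x0:Γ)) ∧ Relation.EqvGen (Rel3 R x0) w3 c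
  | _ => False

lemma P3_len {x0 c : Lp R} : ∀ l : List (Lp R), P3 R x0 c l → l.length = 3 := by
  intro l h
  match l with
  | [] => exact h.elim
  | [_] => exact h.elim
  | [_, _] => exact h.elim
  | [_, _, _] => rfl
  | _ :: _ :: _ :: _ :: _ => exact h.elim

lemma P3_iff {x0 c : Lp R} (lu lv : List (Lp R)) (z α β : Lp R)
    (hα : (α:Γ) ⋖ (z:Γ)) (hβ : (β:Γ) ⋖ (z:Γ)) :
    P3 R x0 c (lu ++ z :: α :: lv) ↔ P3 R x0 c (lu ++ z :: β :: lv) := by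
  match lu, lv with
  | [], [] =>
    constructor <;> intro h <;> exact absurd (P3_len R _ h) (by simp)
  | [], [q] =>
    constructor
    · rintro ⟨h1, h2, h3⟩
      exact ⟨h1, by rw [← h1]; exact hβ, h3⟩
    · rintro ⟨h1, h2, h3⟩
      exact ⟨h1, by rw [← h1]; exact hα, h3⟩
  | [], q1 :: q2 :: qt =>
    constructor <;> intro h <;> exact absurd (P3_len R _ h) (by simp)
  | [p], [] =>
    constructor
    · rintro ⟨h1, h2, h3⟩
      refine ⟨h1, h2, ?_⟩
      refine Relation.EqvGen.trans _ _ _ ?_ h3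
      exact Relation.EqvGen.rel _ _ ⟨z, h2, hβ, hα⟩
    · rintro ⟨h1, h2, h3⟩
      refine ⟨h1, h2, ?_⟩
      refine Relation.EqvGen.trans _ _ _ ?_ h3
      exact Relation.EqvGen.rel _ _ ⟨z, h2, hα, hβ⟩
  | [p], q :: qt =>
    constructor <;> intro h <;> exact absurd (P3_len R _ h) (by simp)
  | p1 :: p2 :: pt, lv =>
    constructor <;> intro h <;> exact absurd (P3_len R _ h) (by simp; omega)

include hli hmul in
lemma not_uniform_witness {x0 a b c c' : Lp R}
    (hax : (a:Γ) ⋖ ↑x0) (hbx : (b:Γ) ⋖ ↑x0) (hca : (c:Γ) ⋖ ↑a) (hcb : (c':Γ) ⋖ ↑b)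
    (hcon : ¬ Relation.EqvGen (fun u v => memS1 R ↑x0 u ∧ memS1 R ↑x0 v ∧
      ∃ cc, memS1 R u cc ∧ memS1 R v cc) ↑a ↑b) :
    ω R F A e [x0, a, c] - ω R F A e [x0, b, c'] ∉ SJ R F A e := by
  classical
  intro hmem
  set lam : TensorAlgebra F ↥(genOne R A e F) →ₗ[F] F :=
    (Finsupp.linearCombination F
      (fun w : FreeMonoid (Lp R) => if P3 R x0 c (FreeMonoid.toList w) then (1:F) else 0)).comp
      (BW R F A e hli).repr.toLinearMap with hlam
  have hlamBW : ∀ w : FreeMonoid (Lp R),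
      lam (BW R F A e hli w) = if P3 R x0 c (FreeMonoid.toList w) then (1:F) else 0 := by
    intro w
    rw [hlam]
    simp only [LinearMap.comp_apply, LinearEquiv.coe_toLinearMap, Module.Basis.repr_self]
    rw [Finsupp.linearCombination_single, one_smul]
  -- lam vanishes on NN
  have hlamNN : ∀ t ∈ NN R F A e hli, lam t = 0 := by
    intro t ht
    refine Submodule.span_induction ?_ ?_ ?_ ?_ ht
    · rintro _ ⟨u, v, g, hg, rfl⟩
      have hgchar := ker_degTwo_char R F A e hli hmul hg.1 hg.2
      set L : TensorAlgebra F ↥(genOne R A e F) →ₗ[F] F :=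
        lam.comp ((LinearMap.mulRight F (BW R F A e hli v)).comp
          (LinearMap.mulLeft F (BW R F A e hli u))) with hL
      have hLg : L g = lam (BW R F A e hli u * g * BW R F A e hli v) := by
        rw [hL]; rfl
      rw [← hLg]
      have hker : Submodule.span F {t | ∃ z α β : Lp R, (α:Γ) ⋖ (z:Γ) ∧ (β:Γ) ⋖ (z:Γ) ∧
          t = ω R F A e [z, α] - ω R F A e [z, β]} ≤ LinearMap.ker L := by
        rw [Submodule.span_le]
        rintro _ ⟨z, α, β, hα, hβ, rfl⟩
        rw [SetLike.mem_coe, LinearMap.mem_ker, hL]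
        simp only [LinearMap.comp_apply, LinearMap.mulLeft_apply, LinearMap.mulRight_apply]
        rw [mul_sub, sub_mul, map_sub]
        rw [← BW_ofList R F A e hli [z, α], ← BW_ofList R F A e hli [z, β]]
        rw [BW_mul, BW_mul, BW_mul, BW_mul, hlamBW, hlamBW]
        have htl : ∀ p q : Lp R,
            FreeMonoid.toList (u * FreeMonoid.ofList [p, q] * v)
            = FreeMonoid.toList u ++ p :: q :: FreeMonoid.toList v := by
          intro p q
          rw [FreeMonoid.toList_mul, FreeMonoid.toList_mul, FreeMonoid.toList_ofList,
            List.append_assoc]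
          rfl
        rw [htl, htl]
        have hiff := P3_iff R (x0 := x0) (c := c) (FreeMonoid.toList u)
          (FreeMonoid.toList v) z α β hα hβ
        rw [if_congr hiff rfl rfl, sub_self]
      exact hker hgchar
    · exact map_zero lam
    · intro x y _ _ hx hy
      rw [map_add, hx, hy, add_zero]
    · intro s x _ hx
      rw [map_smul, hx, smul_zero]
  have hz0 : lam (ω R F A e [x0, a, c] - ω R F A e [x0, b, c']) = 0 :=
    hlamNN _ (SJ_le_NN R F A e hli hmem)
  -- but lam of the witness is 1
  have hP1 : P3 R x0 c [x0, a, c] := ⟨rfl, hax, Relation.EqvGen.refl c⟩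
  have hP2 : ¬ P3 R x0 c [x0, b, c'] := by
    rintro ⟨-, -, h3⟩
    -- transfer lemma
    have htrans : ∀ u v : Lp R, Relation.EqvGen (Rel3 R x0) u v →
        u = v ∨ ((∃ p : Lp R, (p:Γ) ⋖ ↑x0 ∧ (u:Γ) ⋖ ↑p) ∧
          (∃ p : Lp R, (p:Γ) ⋖ ↑x0 ∧ (v:Γ) ⋖ ↑p) ∧
          ∀ pu pv : Lp R, (pu:Γ) ⋖ ↑x0 → (u:Γ) ⋖ ↑pu → (pv:Γ) ⋖ ↑x0 → (v:Γ) ⋖ ↑pv →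
            Relation.EqvGen (fun u v => memS1 R ↑x0 u ∧ memS1 R ↑x0 v ∧
              ∃ cc, memS1 R u cc ∧ memS1 R v cc) ↑pu ↑pv) := by
      intro u v huv
      induction huv with
      | rel u v h =>
        obtain ⟨p, hpx, hup, hvp⟩ := h
        refine Or.inr ⟨⟨p, hpx, hup⟩, ⟨p, hpx, hvp⟩, ?_⟩
        intro pu pv hpux hupu hpvx hvpv
        refine Relation.EqvGen.trans _ ↑p _ ?_ ?_
        · exact Relation.EqvGen.rel _ _ ⟨covBy_memS1 R hpux, covBy_memS1 R hpx,
            ↑u, covBy_memS1 R hupu, covBy_memS1 R hup⟩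
        · exact Relation.EqvGen.rel _ _ ⟨covBy_memS1 R hpx, covBy_memS1 R hpvx,
            ↑v, covBy_memS1 R hvp, covBy_memS1 R hvpv⟩
      | refl u => exact Or.inl rfl
      | symm u v _ ihs =>
        rcases ihs with heq | ⟨h1, h2, h3⟩
        · exact Or.inl heq.symm
        · exact Or.inr ⟨h2, h1, fun pv pu hpvx hvpv hpux hupu =>
            Relation.EqvGen.symm _ _ (h3 pu pv hpux hupu hpvx hvpv)⟩
      | trans u v w _ _ ih1 ih2 =>
        rcases ih1 with heq1 | ⟨h1u, h1v, m1⟩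
        · rw [heq1]; exact ih2
        · rcases ih2 with heq2 | ⟨h2v, h2w, m2⟩
          · rw [← heq2]; exact Or.inr ⟨h1u, h1v, m1⟩
          · refine Or.inr ⟨h1u, h2w, ?_⟩
            intro pu pw hpux hupu hpwx hwpw
            obtain ⟨pv, hpvx, hvpv⟩ := h1v
            exact Relation.EqvGen.trans _ _ _
              (m1 pu pv hpux hupu hpvx hvpv) (m2 pv pw hpvx hvpv hpwx hwpw)
    rcases htrans c' c h3 with heq | ⟨-, -, hm⟩
    · apply hcon
      refine Relation.EqvGen.rel _ _ ⟨covBy_memS1 R hax, covBy_memS1 R hbx,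
        ↑c, covBy_memS1 R hca, ?_⟩
      rw [← heq]
      exact covBy_memS1 R hcb
    · exact hcon (Relation.EqvGen.symm _ _ (hm b a hbx hcb hax hca))
  rw [← BW_ofList R F A e hli [x0, a, c], ← BW_ofList R F A e hli [x0, b, c'],
    map_sub, hlamBW, hlamBW] at hz0
  rw [FreeMonoid.toList_ofList, FreeMonoid.toList_ofList, if_pos hP1, if_neg hP2,
    sub_zero] at hz0
  exact one_ne_zero hz0

end LamSec

theorem quadratic_iff_uniform
    {Γ : Type} [PartialOrder Γ] [Fintype Γ] (R : RankedPoset Γ)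
    (F : Type) [Field F] (A : Type) [Ring A] [Algebra F A]
    (e : Γ → ℕ → A)
    -- (i) the good monomials form an `F`-basis of `A`
    (hli : LinearIndependent F (goodMonomial R A e))
    (hspan : Submodule.span F (Set.range (goodMonomial R A e)) = ⊤)
    -- (ii) `e(x,j)·e(y,k) = e(x,j+k)` whenever `(x,j) ⊵ (y,k)`
    (hmul : ∀ x y : Γ, ∀ j k : ℕ, y ≠ R.star → y < x → j = R.rk x - R.rk y →
      1 ≤ k → k ≤ R.rk y → e x j * e y k = e x (j + k)) :
    Function.Surjective (canMap R A e F) ∧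
      ((∀ z : TensorAlgebra F ↥(genOne R A e F),
          canMap R A e F z = 0 ↔
            z ∈ TwoSidedIdeal.span
              {y | canMap R A e F y = 0 ∧ y ∈ degTwo R A e F}) ↔ R.Uniform) := by
  classical
  refine ⟨canMap_surjective R F A e hmul hspan, ?_⟩
  constructor
  · -- quadratic → uniform
    intro hker x hx
    refine ⟨?_, ?_⟩
    · obtain ⟨a, ha⟩ := exists_covBy R hx
      exact ⟨a, covBy_memS1 R ha⟩
    · intro a b hma hmb
      have hax : a ⋖ x := memS1_covBy R hma
      have hbx : b ⋖ x := memS1_covBy R hmb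
      have hra : R.rk x = R.rk a + 1 := R.rk_covBy hax
      have hrb : R.rk x = R.rk b + 1 := R.rk_covBy hbx
      rcases lt_or_ge (R.rk x) 3 with hlt | hge
      · have hx1 : 1 ≤ R.rk x := one_le_rk R hx
        rcases (show R.rk x = 1 ∨ R.rk x = 2 by omega) with h1 | h2
        · have has : a = R.star := by
            by_contra hne
            have := one_le_rk R hne
            omega
          have hbs : b = R.star := by
            by_contra hne
            have := one_le_rk R hne
            omega
          rw [has, hbs]
          exact Relation.EqvGen.refl _
        · have has : a ≠ R.star := ne_star_of_rk R (by omega)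
          have hbs : b ≠ R.star := ne_star_of_rk R (by omega)
          refine Relation.EqvGen.rel _ _ ⟨hma, hmb, R.star, ?_, ?_⟩
          · exact ⟨star_lt R has, by rw [R.rk_star]; omega⟩
          · exact ⟨star_lt R hbs, by rw [R.rk_star]; omega⟩
      · by_contra hcon
        have hastar : a ≠ R.star := ne_star_of_rk R (by omega)
        have hbstar : b ≠ R.star := ne_star_of_rk R (by omega)
        obtain ⟨c0, hc0⟩ := exists_covBy R hastar
        obtain ⟨c1, hc1⟩ := exists_covBy R hbstar
        have hrc0 : R.rk a = R.rk c0 + 1 := R.rk_covBy hc0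
        have hrc1 : R.rk b = R.rk c1 + 1 := R.rk_covBy hc1
        have hc0star : c0 ≠ R.star := ne_star_of_rk R (by omega)
        have hc1star : c1 ≠ R.star := ne_star_of_rk R (by omega)
        have hwit := not_uniform_witness R F A e hli hmul
          (x0 := ⟨x, hx⟩) (a := ⟨a, hastar⟩) (b := ⟨b, hbstar⟩)
          (c := ⟨c0, hc0star⟩) (c' := ⟨c1, hc1star⟩) hax hbx hc0 hc1 hcon
        apply hwit
        rw [mem_SJ_iff]
        refine (hker _).mp ?_
        have hch1 : Chn R ⟨x, hx⟩ 3 [⟨x, hx⟩, ⟨a, hastar⟩, ⟨c0, hc0star⟩] :=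
          Chn.cons _ hax (Chn.cons _ hc0 (Chn.single _))
        have hch2 : Chn R ⟨x, hx⟩ 3 [⟨x, hx⟩, ⟨b, hbstar⟩, ⟨c1, hc1star⟩] :=
          Chn.cons _ hbx (Chn.cons _ hc1 (Chn.single _))
        rw [map_sub, canMap_ω, canMap_ω, hch1.eW_eq R A e hmul, hch2.eW_eq R A e hmul,
          sub_self]
  · -- uniform → quadratic
    intro huni z
    constructor
    · intro hz
      exact (mem_SJ_iff R F A e).mp (ker_le_SJ R F A e hli hmul huni z hz)
    · intro hzJ
      exact canMap_eq_zero_of_mem_SJ R F A e ((mem_SJ_iff R F A e).mpr hzJ)
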